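/- Let α₁, α₂ be real numbers with α₁ < 1 and α₂ < 1, and let t > 0. Then the double integral ∫₀^∞ ∫₀^∞ e^{−(x+y)²/(4t)} x^{−α₁} y^{−α₂} dx dy converges and equals 2^{1−α₁−α₂} · Γ((2−α₁−α₂)/2) · (Γ(1−α₁)Γ(1−α₂)/Γ(2−α₁−α₂)) · t^{(2−α₁−α₂)/2}. -/

import Mathlib

open MeasureTheory Set

open Real

lemma beta_left {a : ℝ} (ha : 0 < a) (b : ℝ) :
    IntervalIntegrable (fun x : ℝ => x ^ (a - 1) * (1 - x) ^ (b - 1)) volume 0 (1/2) := by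
  apply IntervalIntegrable.mul_continuousOn
    (intervalIntegral.intervalIntegrable_rpow' (by linarith))
  apply ContinuousOn.rpow_const (by fun_prop)
  intro x hx
  rw [uIcc_of_le (by norm_num)] at hx
  left
  have := hx.2
  norm_num at this ⊢
  linarith

lemma beta_integrable {a b : ℝ} (ha : 0 < a) (hb : 0 < b) :
    IntervalIntegrable (fun x : ℝ => x ^ (a - 1) * (1 - x) ^ (b - 1)) volume 0 1 := by
  refine (beta_left ha b).trans ?_
  rw [IntervalIntegrable.iff_comp_neg]
  convert ((beta_left hb a).comp_add_right 1).symm using 1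
  · ext x; ring_nf
  · norm_num
  · norm_num

lemma beta_scaled_integrable {a b s : ℝ} (ha : 0 < a) (hb : 0 < b) (hs : 0 < s) :
    IntegrableOn (fun x : ℝ => x ^ (a - 1) * (s - x) ^ (b - 1)) (Ioo 0 s) := by
  have h := ((beta_integrable ha hb).comp_mul_left (c := s⁻¹)).const_mul (s ^ (a + b - 2))
  rw [zero_div, one_div, inv_inv] at h
  have h2 : IntegrableOn (fun x : ℝ =>
      s ^ (a + b - 2) * ((s⁻¹ * x) ^ (a - 1) * (1 - s⁻¹ * x) ^ (b - 1))) (Ioo 0 s) :=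
    (h.1.mono_set Ioo_subset_Ioc_self)
  refine h2.congr_fun (fun x hx => ?_) measurableSet_Ioo
  have hx0 : 0 < x := hx.1
  have hxs : x < s := hx.2
  have h1 : (s⁻¹ * x) ^ (a - 1) = s ^ (1 - a) * x ^ (a - 1) := by
    rw [mul_rpow (by positivity) hx0.le, ← rpow_neg_one, ← rpow_mul hs.le]
    ring_nf
  have h2' : (1 - s⁻¹ * x) ^ (b - 1) = s ^ (1 - b) * (s - x) ^ (b - 1) := by
    have : 1 - s⁻¹ * x = s⁻¹ * (s - x) := by field_simp
    rw [this, mul_rpow (by positivity) (by linarith), ← rpow_neg_one, ← rpow_mul hs.le]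
    ring_nf
  beta_reduce
  rw [h1, h2', show s ^ (a + b - 2) * (s ^ (1 - a) * x ^ (a - 1) * (s ^ (1 - b) * (s - x) ^ (b - 1)))
      = (s ^ (a + b - 2) * s ^ (1 - a) * s ^ (1 - b)) * (x ^ (a - 1) * (s - x) ^ (b - 1)) by ring,
    ← rpow_add hs, ← rpow_add hs, show a + b - 2 + (1 - a) + (1 - b) = 0 by ring, rpow_zero, one_mul]

lemma beta_scaled_value {a b s : ℝ} (ha : 0 < a) (hb : 0 < b) (hs : 0 < s) :
    ∫ x in Ioo 0 s, x ^ (a - 1) * (s - x) ^ (b - 1) =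
      s ^ (a + b - 1) * (Gamma a * Gamma b / Gamma (a + b)) := by
  have hA : 0 < (a : ℂ).re := by simpa using ha
  have hB : 0 < (b : ℂ).re := by simpa using hb
  have hG : Real.Gamma (a + b) ≠ 0 := (Real.Gamma_pos_of_pos (by linarith)).ne'
  have hbeta : Complex.betaIntegral a b = ((Gamma a * Gamma b / Gamma (a + b) : ℝ) : ℂ) := by
    have h := Complex.Gamma_mul_Gamma_eq_betaIntegral hA hB
    rw [← Complex.ofReal_add, Complex.Gamma_ofReal, Complex.Gamma_ofReal,
      Complex.Gamma_ofReal] at h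
    rw [Complex.ofReal_div, Complex.ofReal_mul, h]
    rw [mul_comm, mul_div_assoc, div_self ((Complex.ofReal_ne_zero).mpr hG), mul_one]
  have hscaled := Complex.betaIntegral_scaled a b hs
  have hcongr : ∫ x in (0:ℝ)..s, (x : ℂ) ^ ((a : ℂ) - 1) * ((s : ℂ) - x) ^ ((b : ℂ) - 1) =
      ((∫ x in Ioo (0:ℝ) s, x ^ (a - 1) * (s - x) ^ (b - 1) : ℝ) : ℂ) := by
    rw [intervalIntegral.integral_of_le hs.le, ← integral_Ioc_eq_integral_Ioo]
    have heq : ∫ x in Ioc (0:ℝ) s, (x : ℂ) ^ ((a : ℂ) - 1) * ((s : ℂ) - x) ^ ((b : ℂ) - 1) =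
        ∫ x in Ioc (0:ℝ) s, ((x ^ (a - 1) * (s - x) ^ (b - 1) : ℝ) : ℂ) := by
      refine setIntegral_congr_fun measurableSet_Ioc (fun x hx => ?_)
      rw [Complex.ofReal_mul, Complex.ofReal_cpow hx.1.le,
        show ((s : ℂ) - x) = ((s - x : ℝ) : ℂ) by push_cast; ring,
        Complex.ofReal_cpow (by simp [hx.2, sub_nonneg]),
        Complex.ofReal_sub, Complex.ofReal_sub, Complex.ofReal_one]
      norm_cast
    rw [heq]; exact integral_ofReal
  rw [hcongr, hbeta] at hscaled
  have hpow : ((s : ℂ)) ^ ((a : ℂ) + b - 1) = ((s ^ (a + b - 1) : ℝ) : ℂ) := by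
    rw [show (a : ℂ) + b - 1 = ((a + b - 1 : ℝ) : ℂ) by push_cast; ring,
      Complex.ofReal_cpow hs.le]
  rw [hpow, ← Complex.ofReal_mul] at hscaled
  exact_mod_cast hscaled

lemma gauss_congr {q t : ℝ} (ht : 0 < t) (s : ℝ) (hs : s ∈ Ioi (0:ℝ)) :
    s ^ q * exp (-(4*t)⁻¹ * s ^ (2:ℝ)) = s ^ q * exp (-s ^ 2 / (4*t)) := by
  rw [rpow_two, neg_mul, inv_mul_eq_div, neg_div]

lemma gauss_moment_integrable {q t : ℝ} (hq : -1 < q) (ht : 0 < t) :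
    IntegrableOn (fun s : ℝ => s ^ q * exp (-s ^ 2 / (4*t))) (Ioi 0) := by
  refine (integrableOn_rpow_mul_exp_neg_mul_rpow hq two_pos
    (by positivity : (0:ℝ) < (4*t)⁻¹)).congr_fun (gauss_congr ht) measurableSet_Ioi

lemma gauss_moment_value {q t : ℝ} (hq : -1 < q) (ht : 0 < t) :
    ∫ s in Ioi (0:ℝ), s ^ q * exp (-s ^ 2 / (4*t)) =
      (4*t) ^ ((q+1)/2) * (1/2) * Gamma ((q+1)/2) := by
  rw [← setIntegral_congr_fun measurableSet_Ioi (gauss_congr ht),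
    integral_rpow_mul_exp_neg_mul_rpow two_pos hq (by positivity : (0:ℝ) < (4*t)⁻¹)]
  congr 1
  congr 1
  rw [← rpow_neg_one, ← rpow_mul (by positivity)]
  norm_num
  congr 1
  ring

theorem halfLine_neumann_dirichlet_integral (α₁ α₂ : ℝ) (h1 : α₁ < 1) (h2 : α₂ < 1)
    (t : ℝ) (ht : 0 < t) :
    IntegrableOn
      (fun p : ℝ × ℝ => Real.exp (-(p.1 + p.2) ^ 2 / (4 * t)) * p.1 ^ (-α₁) * p.2 ^ (-α₂))
      (Ioi 0 ×ˢ Ioi 0) ∧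
    ∫ p in Ioi (0 : ℝ) ×ˢ Ioi (0 : ℝ),
        Real.exp (-(p.1 + p.2) ^ 2 / (4 * t)) * p.1 ^ (-α₁) * p.2 ^ (-α₂) =
      2 ^ (1 - α₁ - α₂) * Real.Gamma ((2 - α₁ - α₂) / 2) *
        (Real.Gamma (1 - α₁) * Real.Gamma (1 - α₂) / Real.Gamma (2 - α₁ - α₂)) *
        t ^ ((2 - α₁ - α₂) / 2) := by
  have ha : (0:ℝ) < 1 - α₂ := by linarith
  have hb : (0:ℝ) < 1 - α₁ := by linarith
  set f : ℝ × ℝ → ℝ :=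
    fun p => Real.exp (-(p.1 + p.2) ^ 2 / (4 * t)) * p.1 ^ (-α₁) * p.2 ^ (-α₂) with hf
  set B : ℝ := Gamma (1 - α₂) * Gamma (1 - α₁) / Gamma (1 - α₂ + (1 - α₁)) with hB
  set G : ℝ × ℝ → ℝ := ({p : ℝ × ℝ | 0 < p.2 ∧ p.2 < p.1}).indicator
    (fun p => Real.exp (-p.1 ^ 2 / (4 * t)) * (p.1 - p.2) ^ (-α₁) * p.2 ^ (-α₂)) with hG
  set T : ℝ × ℝ → ℝ × ℝ := fun z => (z.1 + z.2, z.2) with hT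
  -- measure preserving and embedding
  have hTmp : MeasurePreserving T (volume : Measure (ℝ × ℝ)) volume := by
    rw [Measure.volume_eq_prod]
    exact measurePreserving_add_prod volume volume
  have hTemb : MeasurableEmbedding T := by
    let e : ℝ × ℝ ≃ₜ ℝ × ℝ :=
      { toFun := T
        invFun := fun z => (z.1 - z.2, z.2)
        left_inv := fun z => by simp [hT]
        right_inv := fun z => by simp [hT]
        continuous_toFun := by fun_prop
        continuous_invFun := by fun_prop }
    exact e.measurableEmbedding
  -- indicator of f equals G ∘ T
  have hcomp : (Ioi (0:ℝ) ×ˢ Ioi (0:ℝ)).indicator f = G ∘ T := by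
    funext p
    obtain ⟨x, y⟩ := p
    simp only [Function.comp_apply, Set.indicator_apply, Set.mem_prod, Set.mem_Ioi,
      Set.mem_setOf_eq, hT, hG, hf, add_sub_cancel_right]
    have hiff : (0 < x ∧ 0 < y) ↔ (0 < y ∧ y < x + y) := by
      constructor <;> rintro ⟨u, v⟩ <;> constructor <;> linarith
    rw [if_congr hiff rfl rfl]
  -- G is measurable
  have hGset : MeasurableSet {p : ℝ × ℝ | 0 < p.2 ∧ p.2 < p.1} :=
    (measurableSet_lt measurable_const measurable_snd).inter
      (measurableSet_lt measurable_snd measurable_fst)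
  have hGmeas : Measurable G := by
    apply Measurable.indicator _ hGset
    fun_prop
  -- G is nonneg
  have hGnn : ∀ p, 0 ≤ G p := by
    intro p
    apply Set.indicator_nonneg
    rintro q ⟨hq1, hq2⟩
    have : (0:ℝ) < q.1 - q.2 := by linarith
    positivity
  -- slices of G
  have hslice : ∀ s : ℝ, (fun y => G (s, y)) = (Ioo 0 s).indicator
      (fun y => Real.exp (-s ^ 2 / (4 * t)) * (s - y) ^ (-α₁) * y ^ (-α₂)) := by
    intro s
    funext y
    simp only [hG, Set.indicator_apply, Set.mem_setOf_eq, Set.mem_Ioo]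
  -- slice integrability
  have hsliceInt : ∀ s : ℝ, Integrable (fun y => G (s, y)) := by
    intro s
    rw [hslice s, integrable_indicator_iff measurableSet_Ioo]
    rcases le_or_gt s 0 with hs | hs
    · rw [Ioo_eq_empty (by linarith)]
      exact integrableOn_empty
    · have h := (beta_scaled_integrable ha hb hs).const_mul (Real.exp (-s ^ 2 / (4 * t)))
      refine IntegrableOn.congr_fun h (fun y hy => ?_) measurableSet_Ioo
      rw [show (1:ℝ) - α₂ - 1 = -α₂ by ring, show (1:ℝ) - α₁ - 1 = -α₁ by ring]
      ring
  -- slice integral values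
  have hsliceval : ∀ s : ℝ, ∫ y, G (s, y) = (Ioi (0:ℝ)).indicator
      (fun s => Real.exp (-s ^ 2 / (4 * t)) * s ^ (1 - α₁ - α₂) * B) s := by
    intro s
    rw [hslice s, integral_indicator measurableSet_Ioo]
    rcases le_or_gt s 0 with hs | hs
    · rw [Ioo_eq_empty (by linarith), Set.indicator_of_notMem (by simpa using hs)]
      simp
    · rw [Set.indicator_of_mem (by simpa using hs)]
      have hval := beta_scaled_value ha hb hs
      rw [show (1:ℝ) - α₂ - 1 = -α₂ by ring, show (1:ℝ) - α₁ - 1 = -α₁ by ring] at hval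
      calc ∫ y in Ioo 0 s, Real.exp (-s ^ 2 / (4 * t)) * (s - y) ^ (-α₁) * y ^ (-α₂)
          = ∫ y in Ioo 0 s, Real.exp (-s ^ 2 / (4 * t)) * (y ^ (-α₂) * (s - y) ^ (-α₁)) := by
            refine setIntegral_congr_fun measurableSet_Ioo (fun y hy => ?_); ring
        _ = Real.exp (-s ^ 2 / (4 * t)) * (s ^ (1 - α₂ + (1 - α₁) - 1) * B) := by
            rw [integral_const_mul, hval]
        _ = Real.exp (-s ^ 2 / (4 * t)) * s ^ (1 - α₁ - α₂) * B := by
            rw [show (1:ℝ) - α₂ + (1 - α₁) - 1 = 1 - α₁ - α₂ by ring]; ring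
  -- integrability of the indicator outer function
  have hq : (-1:ℝ) < 1 - α₁ - α₂ := by linarith
  have houter : Integrable ((Ioi (0:ℝ)).indicator
      (fun s => Real.exp (-s ^ 2 / (4 * t)) * s ^ (1 - α₁ - α₂) * B)) := by
    rw [integrable_indicator_iff measurableSet_Ioi]
    have h := (gauss_moment_integrable hq ht).mul_const B
    refine IntegrableOn.congr_fun h (fun s hs => ?_) measurableSet_Ioi
    ring
  -- Integrable G
  have hGint : Integrable G := by
    rw [Measure.volume_eq_prod]
    refine (integrable_prod_iff (by rw [← Measure.volume_eq_prod]; exact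
      hGmeas.aestronglyMeasurable)).mpr ⟨?_, ?_⟩
    · exact Filter.Eventually.of_forall fun s => hsliceInt s
    · refine houter.congr ?_
      refine Filter.Eventually.of_forall fun s => ?_
      rw [← hsliceval s]
      exact integral_congr_ae (Filter.Eventually.of_forall fun y =>
        (Real.norm_of_nonneg (hGnn (s, y))).symm)
  -- integral of G
  have hGval : ∫ p, G p = B * ((4 * t) ^ ((2 - α₁ - α₂)/2) * (1/2) * Gamma ((2 - α₁ - α₂)/2)) := by
    rw [Measure.volume_eq_prod, integral_prod _ (by rw [← Measure.volume_eq_prod]; exact hGint)]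
    calc ∫ s, ∫ y, G (s, y)
        = ∫ s, (Ioi (0:ℝ)).indicator
            (fun s => Real.exp (-s ^ 2 / (4 * t)) * s ^ (1 - α₁ - α₂) * B) s := by
          exact integral_congr_ae (Filter.Eventually.of_forall fun s => hsliceval s)
      _ = ∫ s in Ioi (0:ℝ), Real.exp (-s ^ 2 / (4 * t)) * s ^ (1 - α₁ - α₂) * B :=
          integral_indicator measurableSet_Ioi
      _ = (∫ s in Ioi (0:ℝ), s ^ (1 - α₁ - α₂) * Real.exp (-s ^ 2 / (4 * t))) * B := by
          rw [← integral_mul_const]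
          exact setIntegral_congr_fun measurableSet_Ioi (fun s hs => by ring)
      _ = B * ((4 * t) ^ ((2 - α₁ - α₂)/2) * (1/2) * Gamma ((2 - α₁ - α₂)/2)) := by
          rw [gauss_moment_value hq ht, show (1:ℝ) - α₁ - α₂ + 1 = 2 - α₁ - α₂ by ring, mul_comm]
  -- conclude
  have hint : IntegrableOn f (Ioi 0 ×ˢ Ioi 0) := by
    rw [← integrable_indicator_iff (measurableSet_Ioi.prod measurableSet_Ioi), hcomp]
    exact (hTmp.integrable_comp_emb hTemb).mpr hGint
  refine ⟨hint, ?_⟩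
  have hIeq : ∫ p in Ioi (0:ℝ) ×ˢ Ioi (0:ℝ), f p = ∫ p, G p := by
    rw [← integral_indicator (measurableSet_Ioi.prod measurableSet_Ioi), hcomp]
    exact hTmp.integral_comp hTemb G
  rw [hIeq, hGval]
  -- final arithmetic
  have h4t : (4 * t : ℝ) ^ ((2 - α₁ - α₂)/2) = 2 ^ (2 - α₁ - α₂) * t ^ ((2 - α₁ - α₂)/2) := by
    rw [Real.mul_rpow (by norm_num) ht.le, show (4:ℝ) = 2 ^ (2:ℝ) by
        rw [show (2:ℝ) = ((2:ℕ):ℝ) by norm_num, Real.rpow_natCast]; norm_num,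
      ← Real.rpow_mul (by norm_num), show (2:ℝ) * ((2 - α₁ - α₂)/2) = 2 - α₁ - α₂ by ring]
  have h2 : (2:ℝ) ^ (2 - α₁ - α₂) * (1/2) = 2 ^ (1 - α₁ - α₂) := by
    rw [show (1:ℝ)/2 = 2 ^ (-1:ℝ) by rw [Real.rpow_neg_one]; norm_num,
      ← Real.rpow_add two_pos, show (2:ℝ) - α₁ - α₂ + -1 = 1 - α₁ - α₂ by ring]
  rw [hB, show (1:ℝ) - α₂ + (1 - α₁) = 2 - α₁ - α₂ by ring, h4t, ← h2]
  ring
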